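/- arXiv:1211.6074 — 2 statements merged into one kernel-verified Lean document; each statement's English description precedes it below -/
import Mathlib

section
/- For every positive integer m and every real t, the derivative identity (t^m A_{m+2}(t))' = m t^{m−1} A_m(t) holds. -/
/-- The normalized Bessel-type function `A_m`. -/
noncomputable def A (m : ℕ) (t : ℝ) : ℝ :=
  ∑' ℓ : ℕ, (-1 : ℝ) ^ ℓ * Real.Gamma ((m : ℝ) / 2)
    / (ℓ.factorial * Real.Gamma ((ℓ : ℝ) + (m : ℝ) / 2)) * (t / 2) ^ (2 * ℓ)

lemma gamma_fact_le (a : ℝ) (ha : 1 ≤ a) (n : ℕ) :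
    (n.factorial : ℝ) * Real.Gamma a ≤ Real.Gamma (↑n + a) := by
  induction n with
  | zero => simp
  | succ n ih =>
    have ha0 : (0:ℝ) < a := lt_of_lt_of_le one_pos ha
    have hna : (0:ℝ) < (n:ℝ) + a := by positivity
    have h1 : Real.Gamma (↑(n+1) + a) = ((n:ℝ) + a) * Real.Gamma ((n:ℝ) + a) := by
      rw [show ((n+1:ℕ):ℝ) + a = ((n:ℝ) + a) + 1 by push_cast; ring,
        Real.Gamma_add_one hna.ne']
    have hG : (0:ℝ) < Real.Gamma ((n:ℝ) + a) := Real.Gamma_pos_of_pos hna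
    have hGa : (0:ℝ) < Real.Gamma a := Real.Gamma_pos_of_pos ha0
    rw [h1]
    calc ((n+1).factorial : ℝ) * Real.Gamma a
        = ((n:ℝ)+1) * ((n.factorial : ℝ) * Real.Gamma a) := by
          rw [Nat.factorial_succ]; push_cast; ring
      _ ≤ ((n:ℝ)+a) * ((n.factorial : ℝ) * Real.Gamma a) := by
          apply mul_le_mul_of_nonneg_right (by linarith) (by positivity)
      _ ≤ ((n:ℝ)+a) * Real.Gamma ((n:ℝ) + a) := by
          apply mul_le_mul_of_nonneg_left ih (le_of_lt hna)

lemma coeff_id (m n : ℕ) (hm : 0 < m) :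
    (-1:ℝ)^n * Real.Gamma ((m:ℝ)/2 + 1)
      / (n.factorial * Real.Gamma ((n:ℝ) + ((m:ℝ)/2 + 1))) * (2*(n:ℝ) + (m:ℝ))
    = (m:ℝ) * ((-1:ℝ)^n * Real.Gamma ((m:ℝ)/2)
      / (n.factorial * Real.Gamma ((n:ℝ) + (m:ℝ)/2))) := by
  have hm' : (0:ℝ) < (m:ℝ) := by exact_mod_cast hm
  have hhalf : (0:ℝ) < (m:ℝ)/2 := by linarith
  have hna : (0:ℝ) < (n:ℝ) + (m:ℝ)/2 := by positivity
  have h1 : Real.Gamma ((m:ℝ)/2 + 1) = (m:ℝ)/2 * Real.Gamma ((m:ℝ)/2) :=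
    Real.Gamma_add_one hhalf.ne'
  have h2 : Real.Gamma ((n:ℝ) + ((m:ℝ)/2 + 1))
      = ((n:ℝ) + (m:ℝ)/2) * Real.Gamma ((n:ℝ) + (m:ℝ)/2) := by
    rw [show (n:ℝ) + ((m:ℝ)/2 + 1) = ((n:ℝ) + (m:ℝ)/2) + 1 by ring,
      Real.Gamma_add_one hna.ne']
  have h3 : Real.Gamma ((n:ℝ) + (m:ℝ)/2) ≠ 0 := (Real.Gamma_pos_of_pos hna).ne'
  have h4 : (n.factorial : ℝ) ≠ 0 := by positivity
  rw [h1, h2]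
  field_simp

theorem A_deriv_identity (m : ℕ) (hm : 0 < m) (t : ℝ) :
    deriv (fun s : ℝ => s ^ m * A (m + 2) s) t = m * t ^ (m - 1) * A m t := by
  set e : ℕ → ℝ := fun n => (-1:ℝ)^n * Real.Gamma ((m:ℝ)/2 + 1)
      / (n.factorial * Real.Gamma ((n:ℝ) + ((m:ℝ)/2 + 1))) / 4^n with he
  set g : ℕ → ℝ → ℝ := fun n s => e n * s ^ (2*n + m) with hg
  set g' : ℕ → ℝ → ℝ := fun n s => e n * ((2*n + m : ℕ) * s ^ (2*n + m - 1)) with hg'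
  set R : ℝ := |t| + 1 with hR
  have hR1 : (1:ℝ) ≤ R := by have := abs_nonneg t; rw [hR]; linarith
  have hR0 : (0:ℝ) < R := lt_of_lt_of_le one_pos hR1
  set u : ℕ → ℝ := fun n => ((m:ℝ)+2) * R^(m-1) * ((R^2/2)^n / n.factorial) with hu
  have hm' : (0:ℝ) < (m:ℝ) := by exact_mod_cast hm
  have hhalf1 : (1:ℝ) ≤ (m:ℝ)/2 + 1 := by linarith
  have hu_sum : Summable u := by
    simpa [hu, mul_assoc] using (Real.summable_pow_div_factorial (R^2/2)).mul_left
      (((m:ℝ)+2) * R^(m-1))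
  have he_bound : ∀ n : ℕ, |e n| ≤ 1 / (n.factorial * 4^n) := by
    intro n
    have hna : (0:ℝ) < (n:ℝ) + ((m:ℝ)/2 + 1) := by positivity
    have hG : (0:ℝ) < Real.Gamma ((n:ℝ) + ((m:ℝ)/2 + 1)) := Real.Gamma_pos_of_pos hna
    have hGa : (0:ℝ) < Real.Gamma ((m:ℝ)/2 + 1) :=
      Real.Gamma_pos_of_pos (by linarith)
    have hf : (0:ℝ) < (n.factorial : ℝ) := by positivity
    have hf1 : (1:ℝ) ≤ (n.factorial : ℝ) := by exact_mod_cast n.factorial_pos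
    have hle := gamma_fact_le ((m:ℝ)/2 + 1) hhalf1 n
    have hΓle : Real.Gamma ((m:ℝ)/2 + 1) ≤ Real.Gamma ((n:ℝ) + ((m:ℝ)/2 + 1)) := by
      nlinarith
    have habs : |e n| = Real.Gamma ((m:ℝ)/2 + 1)
        / (n.factorial * Real.Gamma ((n:ℝ) + ((m:ℝ)/2 + 1))) / 4^n := by
      rw [he]
      rw [abs_div, abs_div, abs_mul, abs_mul, abs_pow, abs_pow, abs_neg, abs_one, one_pow,
        one_mul, abs_of_pos hGa, abs_of_pos hG, abs_of_pos hf,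
        abs_of_pos (by norm_num : (0:ℝ) < 4)]
    rw [habs, div_div, div_le_div_iff₀ (by positivity) (by positivity), one_mul]
    calc Real.Gamma ((m:ℝ)/2 + 1) * ((n.factorial : ℝ) * 4^n)
        ≤ Real.Gamma ((n:ℝ) + ((m:ℝ)/2 + 1)) * ((n.factorial : ℝ) * 4^n) :=
          mul_le_mul_of_nonneg_right hΓle (by positivity)
      _ = (n.factorial : ℝ) * Real.Gamma ((n:ℝ) + ((m:ℝ)/2 + 1)) * 4^n := by ring
  have hderiv : ∀ n : ℕ, ∀ y : ℝ, HasDerivAt (g n) (g' n y) y := by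
    intro n y
    simpa [hg, hg'] using (hasDerivAt_pow (2*n+m) y).const_mul (e n)
  have hbound : ∀ n : ℕ, ∀ y ∈ Metric.ball (0:ℝ) R, ‖g' n y‖ ≤ u n := by
    intro n y hy
    have hyR : |y| ≤ R := by
      have := Metric.mem_ball.1 hy
      rw [Real.dist_eq, sub_zero] at this
      exact this.le
    have h2n : (2*(n:ℝ) + (m:ℝ)) ≤ ((m:ℝ)+2) * 2^n := by
      have h1 : (n:ℝ) ≤ 2^n := by exact_mod_cast (Nat.lt_two_pow_self (n := n)).le
      have h2 : (1:ℝ) ≤ (2:ℝ)^n := one_le_pow₀ (by norm_num)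
      nlinarith
    have hexp : 2*n + m - 1 = 2*n + (m-1) := by omega
    have hRy : |y|^(2*n+m-1) ≤ R^(2*n+m-1) := pow_le_pow_left₀ (abs_nonneg y) hyR _
    have hnorm : ‖g' n y‖ = |e n| * ((2*(n:ℝ)+(m:ℝ)) * |y|^(2*n+m-1)) := by
      simp only [hg']
      rw [Real.norm_eq_abs, abs_mul, abs_mul, abs_pow, Nat.abs_cast]
      push_cast
      ring
    have h44 : (4:ℝ)^n = 2^n * 2^n := by rw [← mul_pow]; norm_num
    rw [hnorm, hu]
    calc |e n| * ((2*(n:ℝ)+(m:ℝ)) * |y|^(2*n+m-1))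
        ≤ (1 / (n.factorial * 4^n)) * (((m:ℝ)+2) * 2^n * R^(2*n+m-1)) := by
          apply mul_le_mul (he_bound n) _ (by positivity) (by positivity)
          apply mul_le_mul h2n hRy (by positivity) (by positivity)
      _ = ((m:ℝ)+2) * R^(m-1) * ((R^2/2)^n / n.factorial) := by
          rw [hexp, pow_add, pow_mul, div_pow, h44]
          have hf : (0:ℝ) < (n.factorial : ℝ) := by positivity
          have h2p : (0:ℝ) < (2:ℝ)^n := by positivity
          field_simp
  have hg0 : Summable (fun n => g n 0) := by
    have : (fun n => g n 0) = fun _ => (0:ℝ) := by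
      funext n
      simp [hg, zero_pow (by omega : 2*n + m ≠ 0)]
    rw [this]; exact summable_zero
  have ht : t ∈ Metric.ball (0:ℝ) R := by
    rw [Metric.mem_ball, Real.dist_eq, sub_zero, hR]; linarith
  have h0 : (0:ℝ) ∈ Metric.ball (0:ℝ) R := Metric.mem_ball_self hR0
  have key : HasDerivAt (fun z => ∑' n, g n z) (∑' n, g' n t) t :=
    hasDerivAt_tsum_of_isPreconnected hu_sum Metric.isOpen_ball
      ((convex_ball (0:ℝ) R).isPreconnected) (fun n y _ => hderiv n y) hbound h0 hg0 ht
  have hfun : (fun s : ℝ => s ^ m * A (m + 2) s) = fun z => ∑' n, g n z := by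
    funext s
    rw [A, ← tsum_mul_left]
    refine tsum_congr fun n => ?_
    have hcast : ((m + 2 : ℕ) : ℝ) / 2 = (m:ℝ)/2 + 1 := by push_cast; ring
    rw [hcast]
    simp only [hg, he]
    rw [pow_add, pow_mul, div_pow, pow_mul, div_pow,
      show ((2:ℝ)^2)^n = 4^n by norm_num]
    have h4p : (0:ℝ) < (4:ℝ)^n := by positivity
    field_simp
  rw [hfun, key.deriv, A, ← tsum_mul_left]
  refine tsum_congr fun n => ?_
  have hkey := coeff_id m n hm
  simp only [hg', he]
  rw [show 2*n + m - 1 = 2*n + (m-1) by omega, pow_add, pow_mul, div_pow, pow_mul, pow_mul,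
    show ((2:ℝ)^2)^n = 4^n by norm_num]
  have hc : ((2*n + m : ℕ) : ℝ) = 2*(n:ℝ) + (m:ℝ) := by push_cast; ring
  rw [hc]
  linear_combination ((t^2)^n * t^(m-1) / 4^n) * hkey
end

section
/- For every positive integer m and every ρ > 0, the recurrence L_{m+2}(ρ) = ((m+2)/ρ²)(m L_m(ρ) − A_{m+2}(ρ)) holds. -/
/-- `L_m(ρ) = ∫_0^1 t^{m-1} A_{m+2}(ρ t) dt`. -/
noncomputable def L (m : ℕ) (ρ : ℝ) : ℝ :=
  ∫ t in (0:ℝ)..1, t ^ (m - 1) * A (m + 2) (ρ * t)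

open Real MeasureTheory Set Filter

lemma gammaA_pos (ν : ℝ) (hν : 0 < ν) (ℓ : ℕ) : 0 < Real.Gamma ((ℓ : ℝ) + ν) :=
  Real.Gamma_pos_of_pos (by positivity)

lemma summable_master (ν : ℝ) (hν : 0 < ν) (y : ℝ) (hy : 0 ≤ y) :
    Summable (fun ℓ : ℕ => y ^ ℓ / (ℓ.factorial * Real.Gamma ((ℓ : ℝ) + ν))) := by
  apply summable_of_ratio_norm_eventually_le (r := 1/2) (by norm_num)
  filter_upwards [Filter.eventually_ge_atTop (⌈2*y⌉₊ + 1)] with n hn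
  have hn1 : (1:ℝ) ≤ n := by exact_mod_cast Nat.one_le_iff_ne_zero.mpr (by omega)
  have h2y : 2*y ≤ n := by
    calc 2*y ≤ (⌈2*y⌉₊ : ℝ) := Nat.le_ceil _
    _ ≤ n := by exact_mod_cast Nat.le_of_succ_le hn
  have hΓn : 0 < Real.Gamma ((n : ℝ) + ν) := gammaA_pos ν hν n
  have hΓn1 : Real.Gamma ((n+1 : ℕ) + ν) = ((n:ℝ) + ν) * Real.Gamma ((n:ℝ) + ν) := by
    push_cast
    rw [show ((n:ℝ) + 1 + ν) = ((n:ℝ) + ν) + 1 by ring,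
      Real.Gamma_add_one (by positivity)]
  have hfact : ((n+1).factorial : ℝ) = ((n:ℝ)+1) * n.factorial := by
    push_cast [Nat.factorial_succ]; ring
  have hfn : (0:ℝ) < n.factorial := by exact_mod_cast n.factorial_pos
  have key : y ^ (n+1) / ((n+1).factorial * Real.Gamma ((n+1 : ℕ) + ν))
      = (y / (((n:ℝ)+1) * ((n:ℝ)+ν))) * (y ^ n / (n.factorial * Real.Gamma ((n:ℝ) + ν))) := by
    rw [hΓn1, hfact, pow_succ]
    field_simp
  rw [Real.norm_eq_abs, Real.norm_eq_abs, key, abs_mul]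
  have h1 : |y / (((n:ℝ)+1) * ((n:ℝ)+ν))| ≤ 1/2 := by
    rw [abs_of_nonneg (by positivity)]
    rw [div_le_iff₀ (by positivity)]
    nlinarith
  calc |y / (((n:ℝ)+1) * ((n:ℝ)+ν))| * |y ^ n / (n.factorial * Real.Gamma ((n:ℝ) + ν))|
      ≤ (1/2) * |y ^ n / (n.factorial * Real.Gamma ((n:ℝ) + ν))| :=
        mul_le_mul_of_nonneg_right h1 (abs_nonneg _)
  _ = _ := rfl

lemma norm_term_eq (ν : ℝ) (hν : 0 < ν) (x : ℝ) (ℓ : ℕ) :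
    ‖(-1 : ℝ) ^ ℓ * Real.Gamma ν / (ℓ.factorial * Real.Gamma ((ℓ : ℝ) + ν)) * x ^ (2 * ℓ)‖
      = Real.Gamma ν * ((x^2) ^ ℓ / (ℓ.factorial * Real.Gamma ((ℓ : ℝ) + ν))) := by
  have hΓ := Real.Gamma_pos_of_pos hν
  have hΓℓ := gammaA_pos ν hν ℓ
  have hfn : (0:ℝ) < ℓ.factorial := by exact_mod_cast ℓ.factorial_pos
  have hre : ((-1:ℝ) ^ ℓ * Real.Gamma ν / (ℓ.factorial * Real.Gamma ((ℓ : ℝ) + ν)) * x ^ (2 * ℓ))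
      = (-1:ℝ) ^ ℓ * (Real.Gamma ν * ((x^2) ^ ℓ / (ℓ.factorial * Real.Gamma ((ℓ : ℝ) + ν)))) := by
    rw [pow_mul]; ring
  rw [hre, norm_mul, norm_pow, norm_neg, norm_one, one_pow, one_mul, Real.norm_eq_abs,
    abs_of_nonneg (mul_nonneg hΓ.le (div_nonneg (pow_nonneg (sq_nonneg x) _) (mul_pos hfn hΓℓ).le))]

lemma summable_term (ν : ℝ) (hν : 0 < ν) (x : ℝ) :
    Summable (fun ℓ : ℕ => (-1 : ℝ) ^ ℓ * Real.Gamma ν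
      / (ℓ.factorial * Real.Gamma ((ℓ : ℝ) + ν)) * x ^ (2 * ℓ)) := by
  apply Summable.of_norm
  simp only [norm_term_eq ν hν x]
  exact (summable_master ν hν (x^2) (sq_nonneg x)).mul_left _

lemma summable_termL (ν : ℝ) (hν : 0 < ν) (x : ℝ) (d : ℕ → ℝ) (hd : ∀ ℓ, 1 ≤ d ℓ) :
    Summable (fun ℓ : ℕ => (-1 : ℝ) ^ ℓ * Real.Gamma ν
      / (ℓ.factorial * Real.Gamma ((ℓ : ℝ) + ν)) * x ^ (2 * ℓ) / d ℓ) := by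
  apply Summable.of_norm_bounded ((summable_term ν hν x).abs)
  intro ℓ
  rw [Real.norm_eq_abs, abs_div, abs_of_nonneg (by linarith [hd ℓ] : (0:ℝ) ≤ d ℓ)]
  exact div_le_self (abs_nonneg _) (hd ℓ)

lemma int_pow_Ioc (n : ℕ) : ∫ t in Set.Ioc (0:ℝ) 1, t ^ n = 1/((n:ℝ)+1) := by
  rw [← intervalIntegral.integral_of_le zero_le_one, integral_pow]
  simp

lemma L_eq (m : ℕ) (hm : 0 < m) (ρ : ℝ) :
    L m ρ = ∑' ℓ : ℕ, (-1 : ℝ) ^ ℓ * Real.Gamma (((m:ℝ)+2)/2)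
      / (ℓ.factorial * Real.Gamma ((ℓ : ℝ) + ((m:ℝ)+2)/2)) * (ρ/2) ^ (2*ℓ) / (2*(ℓ:ℝ)+m) := by
  have hν : (0:ℝ) < ((m:ℝ)+2)/2 := by positivity
  set ν : ℝ := ((m:ℝ)+2)/2 with hνdef
  set c : ℕ → ℝ := fun ℓ => (-1 : ℝ) ^ ℓ * Real.Gamma ν
      / (ℓ.factorial * Real.Gamma ((ℓ : ℝ) + ν)) * (ρ/2) ^ (2*ℓ) with hc
  have key : ∀ t : ℝ, t ^ (m-1) * A (m+2) (ρ*t) = ∑' ℓ : ℕ, c ℓ * t ^ (2*ℓ + (m-1)) := by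
    intro t
    rw [A, ← tsum_mul_left]
    apply tsum_congr
    intro ℓ
    have h1 : ((m+2 : ℕ) : ℝ)/2 = ν := by push_cast [hνdef]; ring
    have h2 : (ρ*t/2 : ℝ) ^ (2*ℓ) = (ρ/2) ^ (2*ℓ) * t ^ (2*ℓ) := by
      rw [show ρ*t/2 = (ρ/2)*t by ring, mul_pow]
    rw [h1, h2, pow_add, hc]
    ring
  have hInt : ∀ ℓ : ℕ, Integrable (fun t : ℝ => c ℓ * t ^ (2*ℓ + (m-1)))
      (volume.restrict (Set.Ioc (0:ℝ) 1)) :=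
    fun ℓ => (Continuous.integrableOn_Ioc (continuous_const.mul (continuous_pow _)))
  have hNorm : ∀ ℓ : ℕ, ∫ t in Set.Ioc (0:ℝ) 1, ‖c ℓ * t ^ (2*ℓ + (m-1))‖ = |c ℓ| / (2*(ℓ:ℝ)+m) := by
    intro ℓ
    have : ∀ t ∈ Set.Ioc (0:ℝ) 1, ‖c ℓ * t ^ (2*ℓ + (m-1))‖ = |c ℓ| * t ^ (2*ℓ + (m-1)) := by
      intro t ht
      rw [Real.norm_eq_abs, abs_mul, abs_of_nonneg (pow_nonneg ht.1.le _)]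
    rw [setIntegral_congr_fun measurableSet_Ioc this, MeasureTheory.integral_const_mul, int_pow_Ioc]
    have hcast : ((2*ℓ + (m-1) : ℕ) : ℝ) + 1 = 2*(ℓ:ℝ) + m := by
      push_cast [Nat.cast_sub (Nat.one_le_iff_ne_zero.mpr hm.ne')]
      ring
    rw [hcast, mul_one_div]
  have hden : ∀ ℓ : ℕ, (1:ℝ) ≤ 2*(ℓ:ℝ)+m := by
    intro ℓ
    have : (1:ℝ) ≤ (m:ℝ) := by exact_mod_cast hm
    have : (0:ℝ) ≤ (ℓ:ℝ) := ℓ.cast_nonneg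
    linarith
  have hSum : Summable fun ℓ : ℕ => ∫ t in Set.Ioc (0:ℝ) 1, ‖c ℓ * t ^ (2*ℓ + (m-1))‖ := by
    simp only [hNorm]
    apply Summable.of_nonneg_of_le (fun ℓ => by positivity) (fun ℓ => ?_)
      ((summable_term ν hν (ρ/2)).abs)
    calc |c ℓ| / (2*(ℓ:ℝ)+m) ≤ |c ℓ| / 1 :=
          div_le_div_of_nonneg_left (abs_nonneg _) one_pos (hden ℓ) |>.trans_eq rfl
    _ = |c ℓ| := div_one _
  rw [L, intervalIntegral.integral_of_le zero_le_one]
  calc ∫ t in Set.Ioc (0:ℝ) 1, t ^ (m-1) * A (m+2) (ρ*t)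
      = ∫ t in Set.Ioc (0:ℝ) 1, ∑' ℓ : ℕ, c ℓ * t ^ (2*ℓ + (m-1)) := by
        apply integral_congr_ae
        filter_upwards with t using key t
  _ = ∑' ℓ : ℕ, ∫ t in Set.Ioc (0:ℝ) 1, c ℓ * t ^ (2*ℓ + (m-1)) :=
        (MeasureTheory.integral_tsum_of_summable_integral_norm hInt hSum).symm
  _ = ∑' ℓ : ℕ, c ℓ / (2*(ℓ:ℝ)+m) := by
        apply tsum_congr
        intro ℓ
        rw [MeasureTheory.integral_const_mul, int_pow_Ioc]
        have hcast : ((2*ℓ + (m-1) : ℕ) : ℝ) + 1 = 2*(ℓ:ℝ) + m := by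
          push_cast [Nat.cast_sub (Nat.one_le_iff_ne_zero.mpr hm.ne')]
          ring
        rw [hcast, mul_one_div]

theorem L_recurrence (m : ℕ) (hm : 0 < m) (ρ : ℝ) (hρ : 0 < ρ) :
    L (m + 2) ρ = ((m : ℝ) + 2) / ρ ^ 2 * (m * L m ρ - A (m + 2) ρ) := by
  have hν₁ : (0:ℝ) < ((m:ℝ)+2)/2 := by positivity
  have hν₂ : (0:ℝ) < ((m:ℝ)+4)/2 := by positivity
  set ν₁ : ℝ := ((m:ℝ)+2)/2 with hν₁def
  set ν₂ : ℝ := ((m:ℝ)+4)/2 with hν₂def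
  set c : ℕ → ℝ := fun ℓ => (-1 : ℝ) ^ ℓ * Real.Gamma ν₁
      / (ℓ.factorial * Real.Gamma ((ℓ : ℝ) + ν₁)) * (ρ/2) ^ (2*ℓ) with hcdef
  set b : ℕ → ℝ := fun ℓ => (-1 : ℝ) ^ ℓ * Real.Gamma ν₂
      / (ℓ.factorial * Real.Gamma ((ℓ : ℝ) + ν₂)) * (ρ/2) ^ (2*ℓ) with hbdef
  have hA : A (m+2) ρ = ∑' ℓ : ℕ, c ℓ := by
    rw [A]
    apply tsum_congr
    intro ℓ
    have h1 : ((m+2 : ℕ) : ℝ)/2 = ν₁ := by push_cast [hν₁def]; ring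
    rw [h1, hcdef]
  have hL1 : L m ρ = ∑' ℓ : ℕ, c ℓ / (2*(ℓ:ℝ)+m) := L_eq m hm ρ
  have hL2 : L (m+2) ρ = ∑' ℓ : ℕ, b ℓ / (2*(ℓ:ℝ)+(m+2)) := by
    rw [L_eq (m+2) (by omega) ρ]
    apply tsum_congr
    intro ℓ
    have h1 : (((m+2:ℕ):ℝ)+2)/2 = ν₂ := by push_cast [hν₂def]; ring
    rw [h1, hbdef]
    push_cast
    ring_nf
  have hden : ∀ ℓ : ℕ, (1:ℝ) ≤ 2*(ℓ:ℝ)+m := by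
    intro ℓ
    have h1 : (1:ℝ) ≤ (m:ℝ) := by exact_mod_cast hm
    have h2 : (0:ℝ) ≤ (ℓ:ℝ) := ℓ.cast_nonneg
    linarith
  have hc : Summable c := summable_term ν₁ hν₁ (ρ/2)
  have hcd : Summable (fun ℓ : ℕ => c ℓ / (2*(ℓ:ℝ)+m)) :=
    summable_termL ν₁ hν₁ (ρ/2) _ hden
  set K : ℝ := ((m:ℝ)+2)/ρ^2 with hKdef
  set g : ℕ → ℝ := fun ℓ => K * ((m:ℝ) * (c ℓ / (2*(ℓ:ℝ)+m)) - c ℓ) with hgdef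
  have hgsum : Summable g := ((hcd.mul_left (m:ℝ)).sub hc).mul_left K
  have hg0 : g 0 = 0 := by
    simp only [hgdef]
    have hm0 : (m:ℝ) ≠ 0 := by exact_mod_cast hm.ne'
    field_simp
    simp
  have hterm : ∀ k : ℕ, g (k+1) = b k / (2*(k:ℝ)+(m+2)) := by
    intro k
    have hΓeq : Real.Gamma (((k+1:ℕ) : ℝ) + ν₁) = Real.Gamma ((k:ℝ) + ν₂) := by
      congr 1
      push_cast [hν₁def, hν₂def]
      ring
    have hG2 : Real.Gamma ν₂ = ν₁ * Real.Gamma ν₁ := by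
      rw [show ν₂ = ν₁ + 1 by rw [hν₁def, hν₂def]; ring, Real.Gamma_add_one hν₁.ne']
    have hΓk : 0 < Real.Gamma ((k:ℝ) + ν₂) := gammaA_pos ν₂ hν₂ k
    have hfk : (0:ℝ) < k.factorial := by exact_mod_cast k.factorial_pos
    have hfact : ((k+1).factorial : ℝ) = ((k:ℝ)+1) * k.factorial := by
      push_cast [Nat.factorial_succ]; ring
    have hpow : ((ρ:ℝ)/2) ^ (2*(k+1)) = (ρ/2) ^ (2*k) * (ρ^2/4) := by
      rw [show 2*(k+1) = 2*k + 2 by ring, pow_add]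
      ring
    have hd1 : (0:ℝ) < 2*((k:ℝ)+1)+m := by positivity
    have hd2 : (0:ℝ) < 2*(k:ℝ)+((m:ℝ)+2) := by positivity
    simp only [hgdef, hcdef, hbdef]
    push_cast
    rw [show Real.Gamma ((k:ℝ) + 1 + ν₁) = Real.Gamma ((k:ℝ) + ν₂) by
        rw [← hΓeq]; congr 1; push_cast; ring]
    rw [hG2]
    push_cast [Nat.factorial_succ]
    rw [show ((ρ:ℝ)/2) ^ (2*(k+1)) = (ρ/2) ^ (2*k) * (ρ^2/4) from hpow, pow_succ, hKdef]
    have hν₁val : ν₁ = ((m:ℝ)+2)/2 := hν₁def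
    rw [hν₁val]
    field_simp
    ring
  rw [hL2, hL1, hA]
  rw [show (m:ℝ) * ∑' ℓ : ℕ, c ℓ / (2*(ℓ:ℝ)+m) = ∑' ℓ : ℕ, (m:ℝ) * (c ℓ / (2*(ℓ:ℝ)+m)) from
    (tsum_mul_left).symm]
  rw [← Summable.tsum_sub (hcd.mul_left (m:ℝ)) hc]
  rw [show (((m:ℝ)+2)/ρ^2) * ∑' ℓ : ℕ, ((m:ℝ) * (c ℓ / (2*(ℓ:ℝ)+m)) - c ℓ) = ∑' ℓ : ℕ, g ℓ from
    (tsum_mul_left).symm]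
  rw [Summable.tsum_eq_zero_add hgsum, hg0, zero_add]
  exact tsum_congr fun k => (hterm k).symm
end
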